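/- In the quantum Weyl algebra D_q with q a primitive p-th root of unity (p prime), one has σ^p = 1 - (1-q)^p x^p δ^p, where σ = 1 - (1-q)xδ. -/

import Mathlib

noncomputable section

/-- The quantum integer `[n] = 1 + q + ⋯ + q^(n-1)`. -/
def qint {R : Type} [CommRing R] (q : R) (n : ℕ) : R := ∑ k ∈ Finset.range n, q ^ k

/-- The defining relation `δx = q·xδ + 1` of the quantum Weyl algebra
(generator `0` is `x`, generator `1` is `δ`). -/
inductive WeylRel (R : Type) [CommRing R] (q : R) :
    FreeAlgebra R (Fin 2) → FreeAlgebra R (Fin 2) → Prop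
  | rel : WeylRel R q (FreeAlgebra.ι R 1 * FreeAlgebra.ι R 0)
      (q • (FreeAlgebra.ι R 0 * FreeAlgebra.ι R 1) + 1)

/-- The quantum Weyl algebra `D_q = R⟨x,δ⟩/(δx - qxδ - 1)`. -/
def Weyl (R : Type) [CommRing R] (q : R) := RingQuot (WeylRel R q)

instance (R : Type) [CommRing R] (q : R) : Ring (Weyl R q) :=
  inferInstanceAs (Ring (RingQuot _))

instance (R : Type) [CommRing R] (q : R) : Algebra R (Weyl R q) :=
  inferInstanceAs (Algebra R (RingQuot _))

/-- The generator `x` of the quantum Weyl algebra. -/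
def Wx (R : Type) [CommRing R] (q : R) : Weyl R q :=
  RingQuot.mkAlgHom R (WeylRel R q) (FreeAlgebra.ι R 0)

/-- The generator `δ` of the quantum Weyl algebra. -/
def Wd (R : Type) [CommRing R] (q : R) : Weyl R q :=
  RingQuot.mkAlgHom R (WeylRel R q) (FreeAlgebra.ι R 1)



namespace Stmt11Aux

variable {R : Type} [CommRing R]

/-- Gaussian-binomial style coefficients: `qb q n k` satisfies the q-Pascal rule. -/
def qb (q : R) : ℕ → ℕ → R
  | 0, 0 => 1
  | 0, _+1 => 0
  | _+1, 0 => 1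
  | n+1, k+1 => qb q n k + q^(k+1) * qb q n (k+1)

lemma qb_zero_right (q : R) (n : ℕ) : qb q n 0 = 1 := by cases n <;> rfl

lemma qb_eq_zero_of_lt (q : R) : ∀ n k : ℕ, n < k → qb q n k = 0
  | 0, k+1, _ => rfl
  | n+1, k+1, h => by
      have h1 : n < k := Nat.lt_of_succ_lt_succ h
      have h2 : n < k+1 := Nat.lt_succ_of_lt h1
      simp [qb, qb_eq_zero_of_lt q n k h1, qb_eq_zero_of_lt q n (k+1) h2]

lemma qb_diag (q : R) : ∀ n : ℕ, qb q n n = 1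
  | 0 => rfl
  | n+1 => by
      simp [qb, qb_diag q n, qb_eq_zero_of_lt q n (n+1) (Nat.lt_succ_self n)]

lemma qb_prod (q : R) : ∀ n k : ℕ,
    (∏ i ∈ Finset.range k, (1 - q^(i+1))) * qb q n k
      = ∏ i ∈ Finset.range k, (1 - q^(n - i)) := by
  intro n
  induction n with
  | zero =>
    intro k
    cases k with
    | zero => simp [qb_zero_right]
    | succ k' =>
      rw [qb, mul_zero]
      refine (Finset.prod_eq_zero (Finset.mem_range.2 (Nat.succ_pos k')) ?_).symm
      simp
  | succ n ih =>
    intro k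
    cases k with
    | zero => simp [qb_zero_right]
    | succ k' =>
      have hshift : (∏ i ∈ Finset.range (k'+1), (1 - q^(n + 1 - i)))
          = (∏ i ∈ Finset.range k', (1 - q^(n - i))) * (1 - q^(n+1)) := by
        rw [Finset.prod_range_succ']
        simp [Nat.succ_sub_succ]
      rw [hshift, qb, Finset.prod_range_succ, mul_add]
      have e1 : (∏ i ∈ Finset.range k', (1 - q ^ (i + 1))) * (1 - q ^ (k' + 1)) * qb q n k'
          = (1 - q ^ (k' + 1)) * (∏ i ∈ Finset.range k', (1 - q^(n - i))) := by
        rw [mul_right_comm, ih k', mul_comm]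
      have e2 : (∏ i ∈ Finset.range k', (1 - q ^ (i + 1))) * (1 - q ^ (k' + 1)) *
            (q ^ (k' + 1) * qb q n (k'+1))
          = q ^ (k'+1) * ((∏ i ∈ Finset.range k', (1 - q^(n - i))) * (1 - q^(n - k'))) := by
        rw [← Finset.prod_range_succ (fun i => (1 - q^(n - i))), ← ih (k'+1)]
        rw [← Finset.prod_range_succ (fun i => (1 - q^(i+1)))]
        ring
      rw [e1, e2]
      rcases le_or_gt k' n with hk | hk
      · have : q ^ (k'+1) * q ^ (n - k') = q ^ (n+1) := by
          rw [← pow_add]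
          congr 1
          omega
        linear_combination (-(∏ i ∈ Finset.range k', (1 - q ^ (n - i)))) * this
      · have hz : (∏ i ∈ Finset.range k', (1 - q^(n - i))) = 0 := by
          refine Finset.prod_eq_zero (Finset.mem_range.2 hk) ?_
          simp
        rw [hz]
        ring

/-- The coefficients of `σ^n` in the basis `x^k δ^k`. -/
def qc (q : R) (n k : ℕ) : R := (-(1-q))^k * q^(k.choose 2) * qb q n k

lemma qc_zero_right (q : R) (n : ℕ) : qc q n 0 = 1 := by
  simp [qc, qb_zero_right]

lemma qc_eq_zero_of_lt (q : R) (n k : ℕ) (h : n < k) : qc q n k = 0 := by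
  simp [qc, qb_eq_zero_of_lt q n k h]

lemma choose_two_succ (k : ℕ) : (k+1).choose 2 = k + k.choose 2 := by
  rw [Nat.choose_succ_succ]
  simp [Nat.choose_one_right]

lemma qc_succ_succ (q : R) (n k : ℕ) :
    qc q (n+1) (k+1) = q^(k+1) * qc q n (k+1) - q^k * (1-q) * qc q n k := by
  simp only [qc, qb, choose_two_succ, pow_add, pow_succ]
  ring

end Stmt11Aux

section WeylLemmas

open Stmt11Aux

lemma wd_mul_wx (R : Type) [CommRing R] (q : R) :
    Wd R q * Wx R q = q • (Wx R q * Wd R q) + 1 := by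
  have h := RingQuot.mkAlgHom_rel R (WeylRel.rel (R := R) (q := q))
  simp only [map_mul, map_add, map_smul, map_one] at h
  exact h

/-- `σ = 1 - (1-q) x δ`. -/
def Wsig (R : Type) [CommRing R] (q : R) : Weyl R q :=
  1 - (1 - q) • (Wx R q * Wd R q)

lemma wsig_mul_wx (R : Type) [CommRing R] (q : R) :
    Wsig R q * Wx R q = q • (Wx R q * Wsig R q) := by
  have h : Wx R q * Wd R q * Wx R q
      = q • (Wx R q * (Wx R q * Wd R q)) + Wx R q := by
    rw [mul_assoc, wd_mul_wx, mul_add, mul_smul_comm, mul_one]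
  simp only [Wsig, sub_mul, one_mul, smul_mul_assoc, h, mul_sub, mul_one,
    mul_smul_comm]
  module

lemma wsig_mul_wx_pow (R : Type) [CommRing R] (q : R) (k : ℕ) :
    Wsig R q * Wx R q ^ k = (q ^ k) • (Wx R q ^ k * Wsig R q) := by
  induction k with
  | zero => simp
  | succ k ih =>
    rw [pow_succ, ← mul_assoc, ih, smul_mul_assoc, mul_assoc, wsig_mul_wx,
      mul_smul_comm, smul_smul, ← pow_succ, ← mul_assoc]

lemma wsig_mul_term (R : Type) [CommRing R] (q : R) (k : ℕ) :
    Wsig R q * (Wx R q ^ k * Wd R q ^ k)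
      = (q ^ k) • (Wx R q ^ k * Wd R q ^ k)
        - (q ^ k * (1 - q)) • (Wx R q ^ (k+1) * Wd R q ^ (k+1)) := by
  rw [← mul_assoc, wsig_mul_wx_pow, smul_mul_assoc, mul_assoc]
  rw [show Wsig R q * Wd R q ^ k
      = Wd R q ^ k - (1 - q) • (Wx R q * Wd R q ^ (k+1)) by
    rw [Wsig, sub_mul, one_mul, smul_mul_assoc, mul_assoc, ← pow_succ']]
  rw [mul_sub, mul_smul_comm, smul_sub, smul_smul]
  congr 2
  rw [← mul_assoc, ← pow_succ]

lemma wsig_pow (R : Type) [CommRing R] (q : R) (n : ℕ) :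
    Wsig R q ^ n = ∑ k ∈ Finset.range (n+1),
      qc q n k • (Wx R q ^ k * Wd R q ^ k) := by
  induction n with
  | zero => simp [qc_zero_right]
  | succ n ih =>
    rw [pow_succ', ih, Finset.mul_sum]
    simp only [mul_smul_comm, wsig_mul_term, smul_sub, smul_smul,
      Finset.sum_sub_distrib]
    rw [Finset.sum_range_succ'
      (fun k => qc q (n+1) k • (Wx R q ^ k * Wd R q ^ k)) (n+1)]
    simp only [qc_succ_succ, sub_smul, Finset.sum_sub_distrib, qc_zero_right,
      one_smul]
    have hA : ∑ k ∈ Finset.range (n+1),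
        (q^(k+1) * qc q n (k+1)) • (Wx R q ^ (k+1) * Wd R q ^ (k+1))
        = ∑ k ∈ Finset.range (n+1),
            (q^k * qc q n k) • (Wx R q ^ k * Wd R q ^ k)
          + (q^(n+1) * qc q n (n+1)) • (Wx R q ^ (n+1) * Wd R q ^ (n+1))
          - (q^0 * qc q n 0) • (Wx R q ^ 0 * Wd R q ^ 0) := by
      rw [eq_sub_iff_add_eq, ← Finset.sum_range_succ]
      exact (Finset.sum_range_succ' (fun k => (q^k * qc q n k) • (Wx R q ^ k * Wd R q ^ k)) (n+1)).symm
    rw [hA, qc_eq_zero_of_lt q n (n+1) (Nat.lt_succ_self n), qc_zero_right]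
    simp only [pow_zero, mul_one, mul_zero, zero_smul, one_mul, one_smul,
      add_zero, pow_zero, mul_one]
    simp only [mul_comm]
    abel

end WeylLemmas

open Stmt11Aux in
/- `R`, a characteristic-zero integral domain generated over `ℤ` by a primitive
`p`-th root of unity `q`, is (up to isomorphism) the ring `ℤ[q] ⊂ ℚ̄`. -/

/-- `σ^p = 1 - (1-q)^p x^p δ^p` in `D_q`, where `σ = 1 - (1-q) x δ`. -/
theorem stmt11 (p : ℕ) (hp : p.Prime) (R : Type) [CommRing R] [IsDomain R] [CharZero R]
    (q : R) (hq : IsPrimitiveRoot q p) (hgen : Algebra.adjoin ℤ ({q} : Set R) = ⊤) :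
    ((1 : Weyl R q) - algebraMap R (Weyl R q) (1 - q) * (Wx R q * Wd R q)) ^ p =
      1 - algebraMap R (Weyl R q) ((1 - q) ^ p) * (Wx R q ^ p * Wd R q ^ p) := by
  have hS : ((1 : Weyl R q) - algebraMap R (Weyl R q) (1 - q) * (Wx R q * Wd R q))
      = Wsig R q := by
    rw [Wsig, Algebra.smul_def]
  rw [hS, wsig_pow, Finset.sum_range_succ]
  have hmid : ∀ k ∈ Finset.range p, k ≠ 0 →
      qc q p k • (Wx R q ^ k * Wd R q ^ k) = 0 := by
    intro k hk hk0
    have hkp : k < p := Finset.mem_range.1 hk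
    have hqb : qb q p k = 0 := by
      have hprod := qb_prod q p k
      have hrzero : (∏ i ∈ Finset.range k, (1 - q^(p - i))) = 0 := by
        refine Finset.prod_eq_zero (Finset.mem_range.2 (Nat.pos_of_ne_zero hk0)) ?_
        simp [hq.pow_eq_one]
      rw [hrzero] at hprod
      have hP : (∏ i ∈ Finset.range k, (1 - q^(i+1))) ≠ 0 := by
        refine Finset.prod_ne_zero_iff.2 ?_
        intro i hi
        have hne : q ^ (i+1) ≠ 1 := by
          refine hq.pow_ne_one_of_pos_of_lt (Nat.succ_ne_zero i) ?_
          have := Finset.mem_range.1 hi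
          omega
        intro hcon
        exact hne (by linear_combination -hcon)
      exact (mul_eq_zero.1 hprod).resolve_left hP
    simp [qc, hqb]
  rw [Finset.sum_eq_single_of_mem 0 (Finset.mem_range.2 hp.pos) hmid]
  have hkey : ((-1 : R))^p * q^(p.choose 2) = -1 := by
    rcases hp.eq_two_or_odd' with h2 | hodd
    · subst h2
      have h1 : q ^ 2 = 1 := hq.pow_eq_one
      have hne : q ≠ 1 := hq.ne_one one_lt_two
      have hq2 : q = -1 := by
        have : (q - 1) * (q + 1) = 0 := by linear_combination h1
        rcases mul_eq_zero.1 this with h | h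
        · exact absurd (by linear_combination h) hne
        · linear_combination h
      norm_num [hq2]
    · have h2 : 2 ∣ p - 1 := by
        rcases hodd with ⟨m, hm⟩; omega
      have hc : p.choose 2 = p * ((p-1)/2) := by
        rw [Nat.choose_two_right, Nat.mul_div_assoc p h2]
      rw [hc, pow_mul, hq.pow_eq_one, one_pow, hodd.neg_one_pow]
      ring
  have hcpp : qc q p p = -((1-q)^p) := by
    rw [qc, qb_diag, mul_one, show (-(1-q)) = (-1) * (1-q) by ring, mul_pow,
      mul_right_comm, hkey]
    ring
  rw [hcpp, qc_zero_right, pow_zero, pow_zero, one_mul, one_smul,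
    ← Algebra.smul_def, neg_smul]
  abel
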